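/- Let G be a group, H ≤ G a subgroup of finite index t, and g₁, …, g_t ∈ G a complete set of representatives of the right cosets of H, i.e. G is the disjoint union of the sets H g_i for 1 ≤ i ≤ t. Fix a positive integer k and let I = {1, …, t}. Then: (a) for every g ∈ G and every j = (j₁, …, j_k) ∈ I^k there is a unique i = (i₁, …, i_k) ∈ I^k such that g_{j_l} g_{j_{l+1}} ⋯ g_{j_k} · g⁻¹ ∈ H · g_{i_l} g_{i_{l+1}} ⋯ g_{i_k} for every 1 ≤ l ≤ k; and (b) defining g · j to be this unique i gives a left action of the group G on the set I^k. -/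

import Mathlib

section aux
variable {G : Type*} [Group G] {H : Subgroup G} {t : ℕ} {g : Fin t → G}

theorem listEU (hrep : ∀ x : G, ∃! i : Fin t, x * (g i)⁻¹ ∈ H) (as : List G) :
    ∃! bs : List (Fin t), bs.length = as.length ∧
      ∀ l (h : l < as.length), as[l] * (((bs.map g).drop l).prod)⁻¹ ∈ H := by
  induction as with
  | nil =>
      refine ⟨[], ⟨rfl, by simp⟩, ?_⟩
      rintro cs ⟨hlen, -⟩
      exact List.eq_nil_of_length_eq_zero hlen
  | cons a as ih =>
      obtain ⟨bs, ⟨hlen, hbs⟩, huniq⟩ := ih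
      set w := (bs.map g).prod with hw
      obtain ⟨b, hb, hbu⟩ := hrep (a * w⁻¹)
      refine ⟨b :: bs, ⟨by simp [hlen], ?_⟩, ?_⟩
      · intro l hl
        match l with
        | 0 =>
            simpa [mul_assoc] using hb
        | Nat.succ m =>
            simpa using hbs m (by simpa using hl)
      · rintro ⟨⟩ ⟨hclen, hcs⟩
        · simp at hclen
        rename_i c cs
        have hcs' : cs = bs := by
          refine huniq cs ⟨by simpa using hclen, ?_⟩
          intro l hl
          have := hcs (l + 1) (by simpa using hl)
          rw [List.getElem_cons_succ] at this
          simpa using this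
        subst hcs'
        have : a * w⁻¹ * (g c)⁻¹ ∈ H := by
          have := hcs 0 (by simp)
          simpa [mul_assoc] using this
        rw [hbu c this]
end aux

theorem coset_representative_action_on_tuples
    {G : Type*} [Group G] (H : Subgroup G) (t : ℕ) (ht : 0 < t)
    (g : Fin t → G)
    (hrep : ∀ x : G, ∃! i : Fin t, x * (g i)⁻¹ ∈ H)
    (k : ℕ) (hk : 0 < k) :
    (∀ (x : G) (j : Fin k → Fin t), ∃! i : Fin k → Fin t,
      ∀ l : Fin k,
        ((List.ofFn fun m => g (j m)).drop l).prod * x⁻¹ *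
          (((List.ofFn fun m => g (i m)).drop l).prod)⁻¹ ∈ H) ∧
    (∃ act : G → (Fin k → Fin t) → (Fin k → Fin t),
      (∀ (x : G) (j : Fin k → Fin t) (l : Fin k),
        ((List.ofFn fun m => g (j m)).drop l).prod * x⁻¹ *
          (((List.ofFn fun m => g (act x j m)).drop l).prod)⁻¹ ∈ H) ∧
      (∀ j : Fin k → Fin t, act 1 j = j) ∧
      (∀ (x y : G) (j : Fin k → Fin t), act (x * y) j = act x (act y j))) := by
  have parta : ∀ (x : G) (j : Fin k → Fin t), ∃! i : Fin k → Fin t,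
      ∀ l : Fin k,
        ((List.ofFn fun m => g (j m)).drop l).prod * x⁻¹ *
          (((List.ofFn fun m => g (i m)).drop l).prod)⁻¹ ∈ H := by
    intro x j
    obtain ⟨bs, ⟨hlen, hbs⟩, huniq⟩ := listEU hrep
      (List.ofFn fun l : Fin k => ((List.ofFn fun m => g (j m)).drop l).prod * x⁻¹)
    rw [List.length_ofFn] at hlen
    refine ⟨fun m => bs[(m : ℕ)]'(by omega), ?_, ?_⟩
    · intro l
      have h1 : (List.ofFn fun m : Fin k => g (bs[(m : ℕ)]'(by omega))) = bs.map g := by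
        apply List.ext_getElem (by simp [hlen])
        intro n h1 h2
        simp
      rw [h1]
      have := hbs l (by simp [l.isLt])
      simpa using this
    · intro i hi
      have hbi : List.ofFn i = bs := by
        refine huniq (List.ofFn i) ⟨by simp, ?_⟩
        intro l hl
        rw [List.length_ofFn] at hl
        have h2 : List.map g (List.ofFn i) = List.ofFn fun m => g (i m) := by
          apply List.ext_getElem (by simp)
          intro n h1 h2
          simp
        rw [h2]
        simpa using hi ⟨l, hl⟩
      funext m
      have h3 : (List.ofFn i)[(m : ℕ)]'(by simp) = bs[(m : ℕ)]'(by omega) := by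
        simp only [hbi]
      simpa using h3
  refine ⟨parta, ?_⟩
  choose act hact using fun x j => (parta x j).exists
  refine ⟨act, hact, ?_, ?_⟩
  · intro j
    refine (parta 1 j).unique (hact 1 j) ?_
    intro l
    simpa using H.one_mem
  · intro x y j
    refine (parta (x * y) j).unique (hact (x * y) j) ?_
    intro l
    have := H.mul_mem (hact y j l) (hact x (act y j) l)
    convert this using 1
    group
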